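/- arXiv:math/9805031 — 2 statements merged into one kernel-verified Lean document; each statement's English description precedes it below -/
import Mathlib

section
/- Whether a smooth closed subvariety X ⊂ V is transverse to infinity does not depend on the choice of Hermitian inner product on V: if there is a constant k > 0 such that ∠₁(x, T_x X) < k/‖x‖₁ for all x ∈ X with respect to one inner product, then for any other Hermitian inner product on V there exists k' > 0 such that ∠₂(x, T_x X) < k'/‖x‖₂ for all x ∈ X. -/
open Real

variable {d : ℕ}

/-- The angle between two vectors with respect to the standard Hermitian inner product
on `ℂ^d`: `arccos (|⟨p,v⟩| / (‖p‖‖v‖))`. -/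
noncomputable def vecAngle (p v : EuclideanSpace ℂ (Fin d)) : ℝ :=
  Real.arccos (‖(inner ℂ p v : ℂ)‖ / (‖p‖ * ‖v‖))

namespace TransAux

/-- Distance from `p` to the complex line spanned by `v`. -/
noncomputable def dline (p v : EuclideanSpace ℂ (Fin d)) : ℝ :=
  ‖p - ((ℂ ∙ v).starProjection p : EuclideanSpace ℂ (Fin d))‖

lemma dline_le (p v : EuclideanSpace ℂ (Fin d)) (c : ℂ) :
    dline p v ≤ ‖p - c • v‖ := by
  rw [dline, Submodule.starProjection_minimal]
  refine ciInf_le ⟨0, ?_⟩ (⟨c • v, Submodule.mem_span_singleton.mpr ⟨c, rfl⟩⟩ :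
    (ℂ ∙ v))
  rintro a ⟨x, rfl⟩
  positivity

lemma dline_eq (p v : EuclideanSpace ℂ (Fin d)) :
    dline p v = ‖p - ((inner ℂ v p : ℂ) / ((‖v‖ : ℂ) ^ 2)) • v‖ := by
  rw [dline, Submodule.starProjection_singleton ℂ]
  norm_cast

lemma norm_proj (p v : EuclideanSpace ℂ (Fin d)) (hv : v ≠ 0) :
    ‖((inner ℂ v p : ℂ) / ((‖v‖ : ℂ) ^ 2)) • v‖ = ‖(inner ℂ p v : ℂ)‖ / ‖v‖ := by
  have hv' : ‖v‖ ≠ 0 := norm_ne_zero_iff.mpr hv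
  rw [norm_smul, norm_div, norm_pow, Complex.norm_real, Real.norm_of_nonneg (norm_nonneg v),
    ← norm_inner_symm (𝕜 := ℂ) p v]
  field_simp

lemma pythag (p v : EuclideanSpace ℂ (Fin d)) :
    ‖p‖ ^ 2 = dline p v ^ 2
      + ‖((ℂ ∙ v).starProjection p : EuclideanSpace ℂ (Fin d))‖ ^ 2 := by
  have h := norm_add_sq_eq_norm_sq_add_norm_sq_of_inner_eq_zero
    (𝕜 := ℂ) (p - ((ℂ ∙ v).starProjection p : EuclideanSpace ℂ (Fin d)))
    ((ℂ ∙ v).starProjection p : EuclideanSpace ℂ (Fin d))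
    (Submodule.starProjection_inner_eq_zero p _ (Submodule.starProjection_apply_mem _ _))
  have h2 : p - ((ℂ ∙ v).starProjection p : EuclideanSpace ℂ (Fin d))
      + ((ℂ ∙ v).starProjection p : EuclideanSpace ℂ (Fin d)) = p := by abel
  rw [h2] at h
  rw [dline, pow_two, pow_two, pow_two]
  exact h

lemma sin_vecAngle (p v : EuclideanSpace ℂ (Fin d)) (hp : p ≠ 0) (hv : v ≠ 0) :
    Real.sin (vecAngle p v) = dline p v / ‖p‖ := by
  have hp' : (0:ℝ) < ‖p‖ := norm_pos_iff.mpr hp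
  have hv' : (0:ℝ) < ‖v‖ := norm_pos_iff.mpr hv
  have hproj : ‖((ℂ ∙ v).starProjection p : EuclideanSpace ℂ (Fin d))‖
      = ‖(inner ℂ p v : ℂ)‖ / ‖v‖ := by
    rw [Submodule.starProjection_singleton ℂ]
    push_cast
    exact norm_proj p v hv
  have hpy := pythag p v
  rw [hproj] at hpy
  rw [vecAngle, Real.sin_arccos]
  set t := ‖(inner ℂ p v : ℂ)‖ with htdef
  set D := dline p v with hDdef
  have hD : (0:ℝ) ≤ D := norm_nonneg _
  have hpy' : ‖p‖ ^ 2 * ‖v‖ ^ 2 = D ^ 2 * ‖v‖ ^ 2 + t ^ 2 := by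
    field_simp at hpy
    linarith
  have h1 : 1 - (t / (‖p‖ * ‖v‖)) ^ 2 = (D / ‖p‖) ^ 2 := by
    field_simp
    linear_combination hpy'
  rw [h1, Real.sqrt_sq (div_nonneg hD hp'.le)]

lemma core (T : EuclideanSpace ℂ (Fin d) ≃ₗ[ℂ] EuclideanSpace ℂ (Fin d))
    (M : EuclideanSpace ℂ (Fin d) →L[ℂ] EuclideanSpace ℂ (Fin d))
    (hM : ∀ u, M u = T u)
    (p v : EuclideanSpace ℂ (Fin d)) (hp : p ≠ 0) (hv : v ≠ 0) :
    vecAngle (T p) (T v) ≤ π / 2 * ‖M‖ * (‖p‖ / ‖T p‖) * vecAngle p v := by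
  have hTp : T p ≠ 0 := fun h => hp (by simpa using T.injective (by simpa using h))
  have hTv : T v ≠ 0 := fun h => hv (by simpa using T.injective (by simpa using h))
  have hTp' : (0:ℝ) < ‖T p‖ := norm_pos_iff.mpr hTp
  have hp' : (0:ℝ) < ‖p‖ := norm_pos_iff.mpr hp
  set θ₁ := vecAngle p v with hθ₁
  set θ₂ := vecAngle (T p) (T v) with hθ₂
  have hθ₂0 : 0 ≤ θ₂ := Real.arccos_nonneg _
  have hθ₂2 : θ₂ ≤ π / 2 := Real.arccos_le_pi_div_two.mpr (by positivity)
  have hstep1 : θ₂ ≤ π / 2 * Real.sin θ₂ := by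
    have h := Real.mul_le_sin hθ₂0 hθ₂2
    have hπ : (0:ℝ) < π := Real.pi_pos
    have h2 : π / 2 * (2 / π * θ₂) ≤ π / 2 * Real.sin θ₂ :=
      mul_le_mul_of_nonneg_left h (by positivity)
    have h3 : π / 2 * (2 / π * θ₂) = (π / π) * θ₂ := by ring
    rw [div_self hπ.ne', one_mul] at h3
    linarith
  have hsin2 : Real.sin θ₂ = dline (T p) (T v) / ‖T p‖ := sin_vecAngle _ _ hTp hTv
  have hsin1 : Real.sin θ₁ = dline p v / ‖p‖ := sin_vecAngle _ _ hp hv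
  set c : ℂ := (inner ℂ v p : ℂ) / ((‖v‖ : ℂ) ^ 2) with hc
  have hd2 : dline (T p) (T v) ≤ ‖M‖ * dline p v := by
    calc dline (T p) (T v) ≤ ‖T p - c • T v‖ := dline_le _ _ c
      _ = ‖M (p - c • v)‖ := by rw [map_sub, map_smul, hM, hM]
      _ ≤ ‖M‖ * ‖p - c • v‖ := M.le_opNorm _
      _ = ‖M‖ * dline p v := by rw [dline_eq]
  have hsin1' : dline p v = ‖p‖ * Real.sin θ₁ := by
    rw [hsin1]; field_simp
  have hθ₁0 : 0 ≤ θ₁ := Real.arccos_nonneg _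
  have hsinθ₁ : Real.sin θ₁ ≤ θ₁ := Real.sin_le hθ₁0
  have hM0 : (0:ℝ) ≤ ‖M‖ := norm_nonneg _
  have key : dline (T p) (T v) ≤ ‖M‖ * (‖p‖ * θ₁) := by
    calc dline (T p) (T v) ≤ ‖M‖ * dline p v := hd2
      _ = ‖M‖ * (‖p‖ * Real.sin θ₁) := by rw [hsin1']
      _ ≤ ‖M‖ * (‖p‖ * θ₁) :=
          mul_le_mul_of_nonneg_left (mul_le_mul_of_nonneg_left hsinθ₁ hp'.le) hM0
  calc θ₂ ≤ π / 2 * Real.sin θ₂ := hstep1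
    _ = π / 2 * (dline (T p) (T v) / ‖T p‖) := by rw [hsin2]
    _ ≤ π / 2 * ((‖M‖ * (‖p‖ * θ₁)) / ‖T p‖) :=
        mul_le_mul_of_nonneg_left (div_le_div_of_nonneg_right key hTp'.le)
          (by positivity)
    _ = π / 2 * ‖M‖ * (‖p‖ / ‖T p‖) * θ₁ := by
        rw [div_eq_mul_inv, div_eq_mul_inv]; ring

end TransAux

/-- Transversality to infinity is independent of the Hermitian inner
product.  A second Hermitian inner product on `V = ℂ^d` is encoded by a linear
automorphism `T` via `⟨u,v⟩₂ = ⟨Tu,Tv⟩₁` (every Hermitian inner product on a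
finite-dimensional space arises this way), so the second angle between `p` and `v`
is `vecAngle (T p) (T v)` and the second norm of `x` is `‖T x‖`.  If a subset `X`,
with tangent spaces `Tang x ⊂ V`, satisfies the transverse-to-infinity estimate
`∠₁(x, T_x X) < k/‖x‖₁` for some `k > 0`, then there is `k' > 0` with
`∠₂(x, T_x X) < k'/‖x‖₂` for all `x ∈ X`. -/
theorem transverse_to_infinity_independent_of_inner_product
    (T : EuclideanSpace ℂ (Fin d) ≃ₗ[ℂ] EuclideanSpace ℂ (Fin d))
    (X : Set (EuclideanSpace ℂ (Fin d)))
    (Tang : EuclideanSpace ℂ (Fin d) → Submodule ℂ (EuclideanSpace ℂ (Fin d)))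
    (k : ℝ) (hk : 0 < k)
    (h1 : ∀ x ∈ X,
      sInf {a : ℝ | ∃ v ∈ Tang x, v ≠ 0 ∧ a = vecAngle x v} < k / ‖x‖) :
    ∃ k' : ℝ, 0 < k' ∧ ∀ x ∈ X,
      sInf {a : ℝ | ∃ v ∈ Tang x, v ≠ 0 ∧ a = vecAngle (T x) (T v)} < k' / ‖T x‖ := by
  set M : EuclideanSpace ℂ (Fin d) →L[ℂ] EuclideanSpace ℂ (Fin d) :=
    LinearMap.toContinuousLinearMap (T : EuclideanSpace ℂ (Fin d) →ₗ[ℂ] EuclideanSpace ℂ (Fin d))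
    with hMdef
  have hM : ∀ u, M u = T u := fun u => rfl
  have hMnn : (0:ℝ) ≤ ‖M‖ := norm_nonneg M
  have hπ2 : (0:ℝ) < π / 2 := by positivity
  have hk' : (0:ℝ) < π / 2 * (‖M‖ + 1) * k :=
    mul_pos (mul_pos hπ2 (by linarith)) hk
  refine ⟨π / 2 * (‖M‖ + 1) * k, hk', fun x hx => ?_⟩
  -- x ≠ 0
  have hx0 : x ≠ 0 := by
    rintro rfl
    have h := h1 0 hx
    rw [norm_zero, div_zero] at h
    have : (0:ℝ) ≤ sInf {a : ℝ | ∃ v ∈ Tang 0, v ≠ 0 ∧ a = vecAngle 0 v} := by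
      apply Real.sInf_nonneg
      rintro a ⟨v, -, -, rfl⟩
      exact Real.arccos_nonneg _
    linarith
  have hTx : T x ≠ 0 := fun h => hx0 (by simpa using T.injective (by simpa using h))
  have hTx' : (0:ℝ) < ‖T x‖ := norm_pos_iff.mpr hTx
  have hx' : (0:ℝ) < ‖x‖ := norm_pos_iff.mpr hx0
  by_cases hne : ∃ v ∈ Tang x, v ≠ 0
  · -- nonempty case
    have hS1ne : {a : ℝ | ∃ v ∈ Tang x, v ≠ 0 ∧ a = vecAngle x v}.Nonempty := by
      obtain ⟨v, hvT, hv0⟩ := hne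
      exact ⟨vecAngle x v, v, hvT, hv0, rfl⟩
    obtain ⟨a, ⟨v, hvT, hv0, rfl⟩, ha⟩ := exists_lt_of_csInf_lt hS1ne (h1 x hx)
    have hcore := TransAux.core T M hM x v hx0 hv0
    have hbdd : BddBelow {a : ℝ | ∃ v ∈ Tang x, v ≠ 0 ∧ a = vecAngle (T x) (T v)} := by
      refine ⟨0, ?_⟩
      rintro b ⟨w, -, -, rfl⟩
      exact Real.arccos_nonneg _
    have hmem : vecAngle (T x) (T v) ∈
        {a : ℝ | ∃ v ∈ Tang x, v ≠ 0 ∧ a = vecAngle (T x) (T v)} :=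
      ⟨v, hvT, hv0, rfl⟩
    refine lt_of_le_of_lt (csInf_le hbdd hmem) ?_
    have hM0 : (0:ℝ) ≤ ‖M‖ := norm_nonneg _
    have hθ₁lt : vecAngle x v < k / ‖x‖ := ha
    calc vecAngle (T x) (T v)
        ≤ π / 2 * ‖M‖ * (‖x‖ / ‖T x‖) * vecAngle x v := hcore
      _ ≤ π / 2 * ‖M‖ * (‖x‖ / ‖T x‖) * (k / ‖x‖) := by
          refine mul_le_mul_of_nonneg_left hθ₁lt.le ?_
          have h1 : (0:ℝ) ≤ ‖x‖ / ‖T x‖ := div_nonneg hx'.le hTx'.le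
          have h2 : (0:ℝ) ≤ π / 2 := by positivity
          have hM0 : (0:ℝ) ≤ ‖M‖ := norm_nonneg _
          exact mul_nonneg (mul_nonneg h2 hM0) h1
      _ = π / 2 * ‖M‖ * k / ‖T x‖ := by
          rw [mul_assoc, div_mul_div_comm, mul_comm ‖x‖ k,
            mul_div_mul_right _ _ hx'.ne', ← mul_div_assoc]
      _ < π / 2 * (‖M‖ + 1) * k / ‖T x‖ := by
          apply div_lt_div_of_pos_right ?_ hTx'
          have h3 : π / 2 * k > 0 := by positivity
          nlinarith
  · -- empty case
    have hS2 : {a : ℝ | ∃ v ∈ Tang x, v ≠ 0 ∧ a = vecAngle (T x) (T v)} = ∅ := by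
      ext a
      simp only [Set.mem_setOf_eq, Set.mem_empty_iff_false, iff_false]
      rintro ⟨v, hvT, hv0, -⟩
      exact hne ⟨v, hvT, hv0⟩
    rw [hS2, Real.sInf_empty]
    exact div_pos hk' hTx'
end

section
/- Let f = ∏_{i∈I} l_i : V → ℂ be a finite product of nonzero linear forms and X = f⁻¹(1). Then X is transverse to infinity: there exists k > 0 such that for every x ∈ X, the angle between x and the tangent space T_x X = Ker(d_x f) satisfies ∠(x, T_x X) < k/‖x‖. -/
open Finset

variable {d : ℕ}

namespace TransAux
set_option linter.unusedSectionVars false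
set_option maxHeartbeats 1000000

abbrev Vd (d : ℕ) := EuclideanSpace ℂ (Fin d)

variable {d : ℕ} {ι : Type} [DecidableEq ι]

noncomputable def PP (l : ι → (Vd d →L[ℂ] ℂ)) (s : Finset ι) (u : Vd d) : ℂ := ∏ i ∈ s, l i u

noncomputable def DD (l : ι → (Vd d →L[ℂ] ℂ)) (s : Finset ι) (u : Vd d) : Vd d →L[ℂ] ℂ :=
  ∑ i ∈ s, (∏ j ∈ s.erase i, l j u) • l i

lemma erase_split {J s : Finset ι} (hJ : J ⊆ s) {i : ι} (hi : i ∈ J) :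
    (s \ J) ∪ J.erase i = s.erase i := by
  ext a
  simp only [mem_union, mem_sdiff, mem_erase]
  constructor
  · rintro (⟨ha, hna⟩ | ⟨hne, ha⟩)
    · exact ⟨fun h => hna (h ▸ hi), ha⟩
    · exact ⟨hne, hJ ha⟩
  · rintro ⟨hne, ha⟩
    by_cases h : a ∈ J
    · exact Or.inr ⟨hne, h⟩
    · exact Or.inl ⟨ha, h⟩

variable (l : ι → (Vd d →L[ℂ] ℂ))

lemma contP (s : Finset ι) : Continuous (fun u => PP l s u) := by
  unfold PP; exact continuous_finset_prod _ (fun i _ => (l i).continuous)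

lemma contD (s : Finset ι) : Continuous (fun u => DD l s u) := by
  unfold DD
  exact continuous_finset_sum _ (fun i _ =>
    (continuous_finset_prod _ (fun j _ => (l j).continuous)).smul continuous_const)

lemma euler (s : Finset ι) (u : Vd d) : DD l s u u = s.card * PP l s u := by
  unfold DD PP
  rw [ContinuousLinearMap.sum_apply]
  have : ∀ i ∈ s, ((∏ j ∈ s.erase i, l j u) • l i) u = ∏ j ∈ s, l j u := fun i hi => by
    rw [ContinuousLinearMap.smul_apply, smul_eq_mul, Finset.prod_erase_mul _ _ hi]
  rw [Finset.sum_congr rfl this, Finset.sum_const, nsmul_eq_mul]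

lemma P_smul (s : Finset ι) (c : ℂ) (u : Vd d) : PP l s (c • u) = c ^ s.card * PP l s u := by
  unfold PP
  simp only [map_smul, smul_eq_mul]
  rw [Finset.prod_mul_distrib, Finset.prod_const]

lemma D_smul (s : Finset ι) (c : ℂ) (u : Vd d) :
    DD l s (c • u) = c ^ (s.card - 1) • DD l s u := by
  unfold DD
  rw [Finset.smul_sum]
  refine Finset.sum_congr rfl (fun i hi => ?_)
  rw [smul_smul]
  congr 1
  simp only [map_smul, smul_eq_mul]
  rw [Finset.prod_mul_distrib, Finset.prod_const, Finset.card_erase_of_mem hi]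

lemma prod_erase_split {J s : Finset ι} (hJ : J ⊆ s) {i : ι} (hi : i ∈ J) (u : Vd d) :
    ∏ j ∈ s.erase i, l j u = (PP l (s \ J) u) * ∏ j ∈ J.erase i, l j u := by
  rw [← erase_split hJ hi,
    Finset.prod_union (Finset.sdiff_disjoint.mono_right (Finset.erase_subset _ _))]
  rfl

lemma P_split {J s : Finset ι} (hJ : J ⊆ s) (u : Vd d) :
    PP l s u = PP l (s \ J) u * PP l J u := by
  unfold PP; rw [Finset.prod_sdiff hJ]

lemma D_split {J s : Finset ι} (hJ : J ⊆ s) (u : Vd d) :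
    DD l s u = PP l (s \ J) u • DD l J u + PP l J u • DD l (s \ J) u := by
  have hJ' : s \ J ⊆ s := Finset.sdiff_subset
  have hsd : s \ (s \ J) = J := by
    rw [Finset.sdiff_sdiff_self_left, Finset.inter_eq_right.2 hJ]
  unfold DD
  rw [← Finset.sum_sdiff hJ]
  rw [Finset.smul_sum, Finset.smul_sum]
  rw [add_comm]
  congr 1
  · exact Finset.sum_congr rfl fun i hi => by
      rw [prod_erase_split l hJ hi, mul_smul]
  · refine Finset.sum_congr rfl fun i hi => ?_
    rw [prod_erase_split l hJ' hi, hsd, mul_smul]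

/-- The local Łojasiewicz-type estimate near a point of the sphere where not all forms
vanish, given the inductive hypothesis on the subfamily of forms vanishing at `u`. -/
lemma loj_local (s : Finset ι) (u : Vd d)
    (IH : ∀ t ⊂ s, ∃ C : ℝ, 0 < C ∧ ∀ v : Vd d,
      ‖PP l t v‖ ^ t.card ≤ C * ‖DD l t v‖ ^ t.card * ‖PP l t v‖)
    (hns : s.Nonempty)
    (hex : ∃ i ∈ s, l i u ≠ 0) :
    ∃ ε : ℝ, 0 < ε ∧ ∃ C : ℝ, 0 < C ∧ ∀ v ∈ Metric.ball u ε,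
      ‖PP l s v‖ ^ s.card ≤ C * ‖DD l s v‖ ^ s.card * ‖PP l s v‖ := by
  classical
  set n := s.card with hn
  have hn1 : 1 ≤ n := Finset.card_pos.2 hns
  obtain ⟨i₀, hi₀s, hi₀⟩ := hex
  set J : Finset ι := s.filter (fun j => l j u = 0) with hJ
  have hJs : J ⊆ s := Finset.filter_subset _ _
  have hJss : J ⊂ s := by
    refine Finset.ssubset_iff_of_subset hJs |>.2 ⟨i₀, hi₀s, ?_⟩
    simp only [hJ, Finset.mem_filter]
    tauto
  set m := J.card with hm
  have hmn : m ≤ n := Finset.card_le_card hJs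
  have hhu : PP l (s \ J) u ≠ 0 := by
    unfold PP
    refine Finset.prod_ne_zero_iff.2 (fun j hj => ?_)
    rw [Finset.mem_sdiff, hJ, Finset.mem_filter] at hj
    tauto
  by_cases hJe : J = ∅
  · -- no form vanishes at u : easy continuity argument
    have hPu : PP l s u ≠ 0 := by
      have hs : s \ J = s := by rw [hJe, Finset.sdiff_empty]
      rw [hs] at hhu
      exact hhu
    have hDu : DD l s u ≠ 0 := by
      intro h
      have := euler l s u
      rw [h] at this
      simp only [ContinuousLinearMap.zero_apply] at this
      have : (n : ℂ) * PP l s u = 0 := this.symm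
      rcases mul_eq_zero.1 this with h' | h'
      · exact Nat.cast_ne_zero.2 (by omega : n ≠ 0) h'
      · exact hPu h'
    set b := ‖DD l s u‖ / 2 with hb
    set a' := ‖PP l s u‖ / 2 with ha'
    set A' := ‖PP l s u‖ + 1 with hA'
    have hbpos : 0 < b := by have := norm_pos_iff.2 hDu; positivity
    have ha'pos : 0 < a' := by have := norm_pos_iff.2 hPu; positivity
    have hev : ∀ᶠ v in nhds u, b < ‖DD l s v‖ ∧ a' < ‖PP l s v‖ ∧ ‖PP l s v‖ < A' := by
      have c1 : Continuous fun v => ‖DD l s v‖ := (contD l s).norm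
      have c2 : Continuous fun v => ‖PP l s v‖ := (contP l s).norm
      refine ((c1.tendsto u).eventually (lt_mem_nhds ?_)).and
        (((c2.tendsto u).eventually (lt_mem_nhds ?_)).and
          ((c2.tendsto u).eventually (gt_mem_nhds ?_)))
      · rw [hb]; linarith [norm_pos_iff.2 hDu]
      · rw [ha']; linarith [norm_pos_iff.2 hPu]
      · rw [hA']; linarith
    rw [Metric.eventually_nhds_iff_ball] at hev
    obtain ⟨ε, hε, hball⟩ := hev
    refine ⟨ε, hε, A' ^ n / (b ^ n * a'), by positivity, fun v hv => ?_⟩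
    obtain ⟨h1, h2, h3⟩ := hball v hv
    have e1 : ‖PP l s v‖ ^ n ≤ A' ^ n := pow_le_pow_left₀ (norm_nonneg _) h3.le n
    have e2 : b ^ n * a' ≤ ‖DD l s v‖ ^ n * ‖PP l s v‖ := by
      gcongr <;> first
        | exact hbpos.le
        | exact h1.le
        | exact h2.le
        | positivity
    calc ‖PP l s v‖ ^ n ≤ A' ^ n := e1
      _ = A' ^ n / (b ^ n * a') * (b ^ n * a') := by field_simp
      _ ≤ A' ^ n / (b ^ n * a') * (‖DD l s v‖ ^ n * ‖PP l s v‖) := by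
          apply mul_le_mul_of_nonneg_left e2 (by positivity)
      _ = A' ^ n / (b ^ n * a') * ‖DD l s v‖ ^ n * ‖PP l s v‖ := by ring
  · -- J nonempty
    have hJne : J.Nonempty := Finset.nonempty_iff_ne_empty.2 hJe
    have hm1 : 1 ≤ m := Finset.card_pos.2 hJne
    obtain ⟨CJ, hCJ, hIH⟩ := IH J hJss
    set a := ‖PP l (s \ J) u‖ / 2 with ha
    set A := ‖PP l (s \ J) u‖ + 1 with hA
    set M := ‖DD l (s \ J) u‖ + 1 with hM
    have hapos : 0 < a := by have := norm_pos_iff.2 hhu; positivity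
    have hApos : 0 < A := by positivity
    have hMpos : 0 < M := by positivity
    set C' := CJ * (2 * M / a) ^ m with hC'
    have hC'pos : 0 < C' := by positivity
    set δ := min 1 (1 / (2 * C')) with hδ
    have hδpos : 0 < δ := by positivity
    set C₁ := max 1 (CJ ^ n) with hC₁
    have hC₁pos : 0 < C₁ := lt_of_lt_of_le one_pos (le_max_left _ _)
    have hgu : ‖PP l J u‖ < δ := by
      have : PP l J u = 0 := by
        obtain ⟨j, hj⟩ := hJne
        refine Finset.prod_eq_zero hj ?_
        rw [hJ, Finset.mem_filter] at hj
        exact hj.2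
      rw [this, norm_zero]; exact hδpos
    have hev : ∀ᶠ v in nhds u, a < ‖PP l (s \ J) v‖ ∧ ‖PP l (s \ J) v‖ < A ∧
        ‖DD l (s \ J) v‖ < M ∧ ‖PP l J v‖ < δ := by
      have c1 : Continuous fun v => ‖PP l (s \ J) v‖ := (contP l _).norm
      have c2 : Continuous fun v => ‖DD l (s \ J) v‖ := (contD l _).norm
      have c3 : Continuous fun v => ‖PP l J v‖ := (contP l _).norm
      refine ((c1.tendsto u).eventually (lt_mem_nhds ?_)).and
        (((c1.tendsto u).eventually (gt_mem_nhds ?_)).and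
          (((c2.tendsto u).eventually (gt_mem_nhds ?_)).and
            ((c3.tendsto u).eventually (gt_mem_nhds ?_))))
      · rw [ha]; linarith [norm_pos_iff.2 hhu]
      · rw [hA]; linarith
      · rw [hM]; linarith
      · exact hgu
    rw [Metric.eventually_nhds_iff_ball] at hev
    obtain ⟨ε, hε, hball⟩ := hev
    refine ⟨ε, hε, C₁ * A ^ n / ((a / 2) ^ n * a), by positivity, fun v hv => ?_⟩
    obtain ⟨h1, h2, h3, h4⟩ := hball v hv
    by_cases hg0 : PP l J v = 0
    · rw [P_split l hJs v, hg0, mul_zero, norm_zero, zero_pow (by omega)]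
      positivity
    set γ := ‖PP l J v‖ with hγ
    set t := ‖DD l J v‖ with ht
    have hγpos : 0 < γ := norm_pos_iff.2 hg0
    have htnn : 0 ≤ t := norm_nonneg _
    have hIHv : γ ^ m ≤ CJ * t ^ m * γ := hIH v
    have hγ1 : γ ≤ 1 := le_trans h4.le (min_le_left _ _)
    have hγδ : γ < 1 / (2 * C') := lt_of_lt_of_le h4 (min_le_right _ _)
    -- Step A : M * γ ≤ (a/2) * t
    have stepA : M * γ ≤ (a / 2) * t := by
      by_contra hcon
      push_neg at hcon
      have htlt : t < (2 * M / a) * γ := by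
        rw [div_mul_eq_mul_div, lt_div_iff₀ hapos]
        nlinarith
      have : γ ^ m ≤ CJ * ((2 * M / a) * γ) ^ m * γ := by
        refine le_trans hIHv ?_
        gcongr <;> first
          | exact htlt.le
          | positivity
      have h5 : γ ^ m ≤ C' * γ ^ m * γ := by
        rw [hC']
        calc γ ^ m ≤ CJ * ((2 * M / a) * γ) ^ m * γ := this
          _ = CJ * (2 * M / a) ^ m * γ ^ m * γ := by rw [mul_pow]; ring
      have h6 : 1 ≤ C' * γ := by
        have hγm : 0 < γ ^ m := pow_pos hγpos m
        have h5' : 1 * γ ^ m ≤ (C' * γ) * γ ^ m := by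
          rw [one_mul]
          calc γ ^ m ≤ C' * γ ^ m * γ := h5
            _ = (C' * γ) * γ ^ m := by ring
        exact le_of_mul_le_mul_right h5' hγm
      have h7 : C' * γ < 1 / 2 := by
        calc C' * γ < C' * (1 / (2 * C')) := mul_lt_mul_of_pos_left hγδ hC'pos
          _ = 1 / 2 := by
              rw [mul_one_div]
              rw [div_eq_div_iff (by positivity) (by norm_num : (0:ℝ) < 2).ne']
              ring
      linarith
    -- Step B : (a/2) * t ≤ ‖DD l s v‖
    have stepB : (a / 2) * t ≤ ‖DD l s v‖ := by
      have hsplit := D_split l hJs v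
      have e1 : ‖PP l (s \ J) v • DD l J v‖ = ‖PP l (s \ J) v‖ * t :=
        norm_smul (PP l (s \ J) v) (DD l J v)
      have e2 : ‖PP l J v • DD l (s \ J) v‖ = γ * ‖DD l (s \ J) v‖ :=
        norm_smul (PP l J v) (DD l (s \ J) v)
      have tri : ‖PP l (s \ J) v • DD l J v‖ - ‖PP l J v • DD l (s \ J) v‖ ≤ ‖DD l s v‖ := by
        rw [hsplit]
        have := norm_sub_le (PP l (s \ J) v • DD l J v + PP l J v • DD l (s \ J) v)
          (PP l J v • DD l (s \ J) v)
        simp only [add_sub_cancel_right] at this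
        linarith
      have e3 : a * t ≤ ‖PP l (s \ J) v‖ * t :=
        mul_le_mul_of_nonneg_right h1.le htnn
      have e4 : γ * ‖DD l (s \ J) v‖ ≤ γ * M :=
        mul_le_mul_of_nonneg_left h3.le hγpos.le
      have k1 : a * t - γ * M ≤ ‖DD l s v‖ := by
        rw [e1, e2] at tri; linarith
      have k2 : γ * M ≤ (a / 2) * t := by rw [mul_comm]; exact stepA
      nlinarith [k1, k2]
    -- Step C : γ ^ (n-1) ≤ C₁ * t ^ n
    have stepC : γ ^ (n - 1) ≤ C₁ * t ^ n := by
      have hpow : (γ ^ m) ^ n ≤ (CJ * t ^ m * γ) ^ n :=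
        pow_le_pow_left₀ (pow_nonneg hγpos.le m) hIHv n
      obtain ⟨k, hk⟩ : ∃ k, n = k + 1 := ⟨n - 1, by omega⟩
      have hk1 : n - 1 = k := by omega
      have e1 : (γ ^ m) ^ n = (γ ^ (n - 1)) ^ m * γ ^ m := by
        rw [← pow_mul, ← pow_mul, ← pow_add, hk1, hk]
        congr 1
        ring
      have e2 : (CJ * t ^ m * γ) ^ n = CJ ^ n * (t ^ m) ^ n * γ ^ n := by
        rw [mul_pow, mul_pow]
      have e3 : γ ^ n = γ ^ (n - m) * γ ^ m := by
        rw [← pow_add]; congr 1; omega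
      have key : (γ ^ (n - 1)) ^ m * γ ^ m ≤ CJ ^ n * (t ^ m) ^ n * γ ^ (n - m) * γ ^ m := by
        calc (γ ^ (n - 1)) ^ m * γ ^ m = (γ ^ m) ^ n := e1.symm
          _ ≤ (CJ * t ^ m * γ) ^ n := hpow
          _ = CJ ^ n * (t ^ m) ^ n * (γ ^ (n - m) * γ ^ m) := by rw [e2, e3]
          _ = CJ ^ n * (t ^ m) ^ n * γ ^ (n - m) * γ ^ m := by ring
      have key2 : (γ ^ (n - 1)) ^ m ≤ CJ ^ n * (t ^ m) ^ n * γ ^ (n - m) :=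
        le_of_mul_le_mul_right key (pow_pos hγpos m)
      have e4 : γ ^ (n - m) ≤ 1 := pow_le_one₀ hγpos.le hγ1
      have key3 : (γ ^ (n - 1)) ^ m ≤ CJ ^ n * (t ^ n) ^ m := by
        have e5 : (t ^ m) ^ n = (t ^ n) ^ m := by rw [← pow_mul, ← pow_mul, mul_comm]
        calc (γ ^ (n - 1)) ^ m ≤ CJ ^ n * (t ^ m) ^ n * γ ^ (n - m) := key2
          _ ≤ CJ ^ n * (t ^ m) ^ n * 1 := by
              apply mul_le_mul_of_nonneg_left e4 (by positivity)
          _ = CJ ^ n * (t ^ n) ^ m := by rw [mul_one, e5]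
      have key4 : (γ ^ (n - 1)) ^ m ≤ (C₁ * t ^ n) ^ m := by
        rw [mul_pow]
        calc (γ ^ (n - 1)) ^ m ≤ CJ ^ n * (t ^ n) ^ m := key3
          _ ≤ C₁ ^ m * (t ^ n) ^ m := by
              apply mul_le_mul_of_nonneg_right ?_ (by positivity)
              exact le_trans (le_max_right 1 (CJ ^ n)) (le_self_pow₀ (le_max_left _ _) (by omega))
      exact le_of_pow_le_pow_left₀ (by omega) (by positivity) key4
    -- Conclusion
    have ePv : ‖PP l s v‖ = ‖PP l (s \ J) v‖ * γ := by
      rw [P_split l hJs v, norm_mul]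
    have eup : ‖PP l s v‖ ≤ A * γ := by
      rw [ePv]; exact mul_le_mul_of_nonneg_right h2.le hγpos.le
    have elo : a * γ ≤ ‖PP l s v‖ := by
      rw [ePv]; exact mul_le_mul_of_nonneg_right h1.le hγpos.le
    have eγn : γ ^ n = γ ^ (n - 1) * γ := by
      rw [← pow_succ]
      congr 1
      omega
    calc ‖PP l s v‖ ^ n ≤ (A * γ) ^ n := pow_le_pow_left₀ (norm_nonneg _) eup n
      _ = A ^ n * (γ ^ (n - 1) * γ) := by rw [mul_pow, eγn]
      _ ≤ A ^ n * (C₁ * t ^ n * γ) := by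
          apply mul_le_mul_of_nonneg_left ?_ (by positivity)
          exact mul_le_mul_of_nonneg_right stepC hγpos.le
      _ = C₁ * A ^ n / ((a / 2) ^ n * a) * ((a / 2) * t) ^ n * (a * γ) := by
          have hne : ((a / 2) ^ n * a) ≠ 0 := by positivity
          rw [mul_pow]
          field_simp
      _ ≤ C₁ * A ^ n / ((a / 2) ^ n * a) * ‖DD l s v‖ ^ n * ‖PP l s v‖ := by
          gcongr <;> first
            | exact stepB
            | exact elo
            | positivity

lemma loj (s : Finset ι) : ∃ C : ℝ, 0 < C ∧ ∀ u : Vd d,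
    ‖PP l s u‖ ^ s.card ≤ C * ‖DD l s u‖ ^ s.card * ‖PP l s u‖ := by
  classical
  induction s using Finset.strongInduction with
  | _ s IH =>
  rcases Finset.eq_empty_or_nonempty s with rfl | hns
  · exact ⟨1, one_pos, fun u => by simp [PP, DD]⟩
  have hn1 : 1 ≤ s.card := Finset.card_pos.2 hns
  set K : Submodule ℂ (Vd d) := ⨅ j ∈ s, LinearMap.ker (l j : Vd d →ₗ[ℂ] ℂ) with hK
  set T : Set (Vd d) := Metric.sphere 0 1 ∩ (Kᗮ : Set (Vd d)) with hT
  have hTcomp : IsCompact T :=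
    (isCompact_sphere 0 1).inter_right (Submodule.closed_of_finiteDimensional _)
  have hloc : ∀ u ∈ T, ∃ ε : ℝ, 0 < ε ∧ ∃ C : ℝ, 0 < C ∧ ∀ v ∈ Metric.ball u ε,
      ‖PP l s v‖ ^ s.card ≤ C * ‖DD l s v‖ ^ s.card * ‖PP l s v‖ := by
    intro u hu
    refine loj_local l s u IH hns ?_
    by_contra hno
    push_neg at hno
    have huK : u ∈ K := by
      rw [hK]
      refine (Submodule.mem_iInf _).2 (fun j => (Submodule.mem_iInf _).2 (fun hj => ?_))
      exact LinearMap.mem_ker.2 (hno j hj)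
    have hu0 : u = 0 := by
      have := (Submodule.orthogonal_disjoint K).le_bot ⟨huK, hu.2⟩
      simpa using this
    have : ‖u‖ = 1 := by
      have := hu.1
      rwa [mem_sphere_iff_norm, sub_zero] at this
    rw [hu0, norm_zero] at this
    norm_num at this
  choose! ε hε C0 hC0 hgood using hloc
  obtain ⟨t, htT, hcov⟩ := hTcomp.elim_nhds_subcover (fun u => Metric.ball u (ε u))
    (fun u hu => Metric.ball_mem_nhds _ (hε u hu))
  set C := 1 + ∑ x ∈ t, C0 x with hC
  have hC0nn : ∀ x ∈ t, 0 ≤ C0 x := fun x hx => (hC0 x (htT x hx)).le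
  have hCpos : 0 < C := by
    have := Finset.sum_nonneg hC0nn
    rw [hC]; linarith
  have hCge : ∀ x ∈ t, C0 x ≤ C := fun x hx => by
    have := Finset.single_le_sum hC0nn hx
    rw [hC]; linarith
  have goodT : ∀ w ∈ T, ‖PP l s w‖ ^ s.card ≤ C * ‖DD l s w‖ ^ s.card * ‖PP l s w‖ := by
    intro w hw
    obtain ⟨x, hx, hwx⟩ := Set.mem_iUnion₂.1 (hcov hw)
    refine le_trans (hgood x (htT x hx) w hwx) ?_
    gcongr <;> first
      | exact hCge x hx
      | positivity
  have goodE : ∀ p : Vd d, p ∈ Kᗮ →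
      ‖PP l s p‖ ^ s.card ≤ C * ‖DD l s p‖ ^ s.card * ‖PP l s p‖ := by
    intro p hp
    by_cases hp0 : p = 0
    · subst hp0
      obtain ⟨i, hi⟩ := hns
      have hP0 : PP l s (0 : Vd d) = 0 := Finset.prod_eq_zero hi (by simp)
      rw [hP0, norm_zero, zero_pow (by omega)]
      positivity
    · set R := ‖p‖ with hR
      have hRpos : 0 < R := norm_pos_iff.2 hp0
      have hcne : ((R : ℂ))⁻¹ ≠ 0 := by
        simp only [ne_eq, inv_eq_zero, Complex.ofReal_eq_zero]
        exact hRpos.ne'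
      set w : Vd d := ((R : ℂ))⁻¹ • p with hw
      have hw1 : ‖w‖ = 1 := by
        rw [hw, norm_smul, norm_inv, Complex.norm_real, Real.norm_eq_abs,
          abs_of_pos hRpos, inv_mul_cancel₀ hRpos.ne']
      have hwE : w ∈ Kᗮ := Submodule.smul_mem _ _ hp
      have hwT : w ∈ T := ⟨by rw [mem_sphere_iff_norm, sub_zero]; exact hw1, hwE⟩
      have hgw := goodT w hwT
      have hpw : p = (R : ℂ) • w := by
        rw [hw, smul_smul, mul_inv_cancel₀ (by exact_mod_cast hRpos.ne'), one_smul]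
      obtain ⟨k, hk⟩ : ∃ k, s.card = k + 1 := ⟨s.card - 1, by omega⟩
      have eP : ‖PP l s p‖ = R ^ s.card * ‖PP l s w‖ := by
        rw [hpw, P_smul, norm_mul, norm_pow, Complex.norm_real, Real.norm_eq_abs,
          abs_of_pos hRpos]
      have eD : ‖DD l s p‖ = R ^ (s.card - 1) * ‖DD l s w‖ := by
        rw [hpw, D_smul, norm_smul ((R:ℂ) ^ (s.card - 1)) (DD l s w), norm_pow,
          Complex.norm_real, Real.norm_eq_abs, abs_of_pos hRpos]
      rw [eP, eD]
      have hk1 : s.card - 1 = k := by omega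
      rw [hk1, hk]
      calc (R ^ (k+1) * ‖PP l s w‖) ^ (k+1)
          = R ^ ((k+1)*(k+1)) * ‖PP l s w‖ ^ (k+1) := by rw [mul_pow, ← pow_mul]
        _ ≤ R ^ ((k+1)*(k+1)) * (C * ‖DD l s w‖ ^ (k+1) * ‖PP l s w‖) := by
            apply mul_le_mul_of_nonneg_left ?_ (by positivity)
            rw [← hk]
            exact hgw
        _ = C * (R ^ k * ‖DD l s w‖) ^ (k+1) * (R ^ (k+1) * ‖PP l s w‖) := by
            have hsplit : R ^ ((k+1)*(k+1)) = R ^ (k*(k+1)) * R ^ (k+1) := by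
              rw [← pow_add]; congr 1; ring
            rw [hsplit, mul_pow, ← pow_mul]
            ring
  refine ⟨C, hCpos, fun u => ?_⟩
  set p : Vd d := (Kᗮ.orthogonalProjectionOnto u : Vd d) with hp
  have hpe : ∀ i ∈ s, l i p = l i u := by
    intro i hi
    have h1 : u - p ∈ Kᗮᗮ := Submodule.sub_starProjection_mem_orthogonal u
    rw [Submodule.orthogonal_orthogonal] at h1
    rw [hK] at h1
    have h2 : u - p ∈ LinearMap.ker (l i : Vd d →ₗ[ℂ] ℂ) :=
      (Submodule.mem_iInf _).1 ((Submodule.mem_iInf _).1 h1 i) hi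
    have h3 : l i (u - p) = 0 := h2
    rw [map_sub, sub_eq_zero] at h3
    exact h3.symm
  have eP : PP l s u = PP l s p := by
    unfold PP
    exact (Finset.prod_congr rfl (fun i hi => hpe i hi)).symm
  have eD : DD l s u = DD l s p := by
    unfold DD
    refine Finset.sum_congr rfl (fun i hi => ?_)
    congr 1
    exact (Finset.prod_congr rfl (fun j hj => hpe j (Finset.mem_of_mem_erase hj))).symm
  rw [eP, eD]
  exact goodE p (Submodule.coe_mem _)


end TransAux

open TransAux in
set_option maxHeartbeats 1000000 in
/-- Let `f = ∏ᵢ lᵢ` be a finite product of nonzero linear forms on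
`ℂ^d` and `X = f⁻¹(1)`; the tangent space at `x ∈ x` is the kernel. -/
theorem product_of_linear_forms_transverse_to_infinity
    (ι : Type) [Fintype ι] [Nonempty ι] [DecidableEq ι]
    (l : ι → (EuclideanSpace ℂ (Fin d) →L[ℂ] ℂ)) (hl : ∀ i, l i ≠ 0) :
    ∃ k : ℝ, 0 < k ∧ ∀ x : EuclideanSpace ℂ (Fin d),
      (∏ i, l i x) = 1 →
      sInf {a : ℝ | ∃ v : EuclideanSpace ℂ (Fin d),
          (∑ i, (∏ j ∈ univ.erase i, l j x) • l i) v = 0 ∧ v ≠ 0 ∧ a = vecAngle x v}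
        < k / ‖x‖ := by
  classical
  obtain ⟨C, hC, hloj⟩ := loj l Finset.univ
  set n : ℕ := Fintype.card ι with hn
  have hn1 : 1 ≤ n := Fintype.card_pos
  set c : ℝ := min 1 (1 / C) with hc
  have hcpos : 0 < c := lt_min one_pos (by positivity)
  have hπ := Real.pi_pos
  -- the key uniform gradient bound
  have key : ∀ x : Vd d, (∏ i, l i x) = 1 → c ≤ ‖DD l Finset.univ x‖ := by
    intro x hx
    by_contra hcon
    push_neg at hcon
    have hD1 : ‖DD l Finset.univ x‖ < 1 := lt_of_lt_of_le hcon (min_le_left _ _)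
    have hDC : ‖DD l Finset.univ x‖ < 1 / C := lt_of_lt_of_le hcon (min_le_right _ _)
    have hP1 : PP l Finset.univ x = 1 := hx
    have h1 : (1:ℝ) ≤ C * ‖DD l Finset.univ x‖ ^ n * 1 := by
      have := hloj x
      rwa [hP1, norm_one, one_pow, Finset.card_univ, ← hn] at this
    have h2 : ‖DD l Finset.univ x‖ ^ n ≤ ‖DD l Finset.univ x‖ :=
      pow_le_of_le_one (norm_nonneg _) hD1.le (by omega)
    have h3 : C * ‖DD l Finset.univ x‖ < 1 := by
      rw [lt_div_iff₀ hC, mul_comm] at hDC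
      exact hDC
    nlinarith [norm_nonneg (DD l Finset.univ x)]
  refine ⟨2 * Real.pi * n / c, by positivity, fun x hx => ?_⟩
  have hx0 : x ≠ 0 := by
    intro h
    have : (∏ i, l i x) = 0 :=
      Finset.prod_eq_zero (Finset.mem_univ (Classical.arbitrary ι)) (by rw [h]; simp)
    rw [hx] at this
    norm_num at this
  set R : ℝ := ‖x‖ with hR
  have hRpos : 0 < R := norm_pos_iff.2 hx0
  set S : Set ℝ := {a : ℝ | ∃ v : Vd d,
      (∑ i, (∏ j ∈ univ.erase i, l j x) • l i) v = 0 ∧ v ≠ 0 ∧ a = vecAngle x v} with hS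
  have hSbdd : BddBelow S := by
    refine ⟨0, fun a ha => ?_⟩
    obtain ⟨v, -, -, rfl⟩ := ha
    exact Real.arccos_nonneg _
  have hSle : ∀ a ∈ S, a ≤ Real.pi / 2 := by
    rintro a ⟨v, -, -, rfl⟩
    refine Real.arccos_le_pi_div_two.2 ?_
    positivity
  set k : ℝ := 2 * Real.pi * n / c with hk
  have hLx : DD l Finset.univ x x = (n : ℂ) := by
    rw [euler l Finset.univ x]
    have : PP l Finset.univ x = 1 := hx
    rw [this, mul_one, Finset.card_univ]
  have hLc : c ≤ ‖DD l Finset.univ x‖ := key x hx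
  by_cases hcase : R ≤ 2 * n / c
  · -- small x : trivial bound
    have hπk : Real.pi ≤ k / R := by
      rw [le_div_iff₀ hRpos, hk]
      calc Real.pi * R ≤ Real.pi * (2 * n / c) := by
            apply mul_le_mul_of_nonneg_left hcase hπ.le
        _ = 2 * Real.pi * n / c := by ring
    rcases Set.eq_empty_or_nonempty S with hSe | hSne
    · rw [hSe, Real.sInf_empty]
      linarith
    · obtain ⟨a, ha⟩ := hSne
      have : sInf S ≤ Real.pi / 2 := le_trans (csInf_le hSbdd ha) (hSle a ha)
      linarith
  · -- large x : construct a tangent vector close to x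
    push_neg at hcase
    set L : Vd d →L[ℂ] ℂ := DD l Finset.univ x with hL
    set w : Vd d := (InnerProductSpace.toDual ℂ (Vd d)).symm L with hw
    have hwL : ∀ y : Vd d, (inner ℂ w y : ℂ) = L y := fun y =>
      InnerProductSpace.toDual_symm_apply
    have hnw : ‖w‖ = ‖L‖ := LinearIsometryEquiv.norm_map _ _
    have hwc : c ≤ ‖w‖ := by rw [hnw]; exact hLc
    have hwpos : 0 < ‖w‖ := lt_of_lt_of_le hcpos hwc
    set tc : ℂ := (n : ℂ) / ((‖w‖ : ℂ))^2 with htc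
    set v : Vd d := x - tc • w with hv
    have hwx : (inner ℂ w x : ℂ) = (n : ℂ) := by rw [hwL]; exact hLx
    have hww : (inner ℂ w w : ℂ) = ((‖w‖ : ℂ))^2 := by
      rw [inner_self_eq_norm_sq_to_K]
      norm_num
    have hwC : ((‖w‖ : ℝ) : ℂ) ≠ 0 := by exact_mod_cast hwpos.ne'
    have hwv : (inner ℂ w v : ℂ) = 0 := by
      rw [hv, inner_sub_right, inner_smul_right, hwx, hww, htc]
      field_simp
      ring
    have hLv : L v = 0 := by rw [← hwL]; exact hwv
    have hvw0 : (inner ℂ v w : ℂ) = 0 := by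
      rw [← inner_conj_symm, hwv, map_zero]
    have hxv : (inner ℂ x v : ℂ) = ((‖v‖ : ℂ))^2 := by
      have hxd : x = v + tc • w := by rw [hv]; abel
      rw [hxd, inner_add_left, inner_smul_left, hwv, mul_zero, add_zero,
        inner_self_eq_norm_sq_to_K]
      norm_num
    have htcn : ‖tc‖ = n / ‖w‖^2 := by
      rw [htc, norm_div, norm_pow]
      simp [Complex.norm_natCast, Complex.norm_real, abs_of_pos hwpos]
    have htw : ‖tc • w‖ = n / ‖w‖ := by
      rw [norm_smul, htcn, pow_two, ← div_div]
      exact div_mul_cancel₀ _ hwpos.ne'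
    have hpyth : R^2 = ‖v‖^2 + (n / ‖w‖)^2 := by
      have hxd : x = v + tc • w := by rw [hv]; abel
      have hnorm := @norm_add_sq ℂ _ _ _ _ v (tc • w)
      rw [← hxd, inner_smul_right, hvw0, mul_zero, map_zero, mul_zero, add_zero, htw] at hnorm
      rw [hR, hnorm]
    have hnvR : ‖v‖ ≤ R := by
      nlinarith [norm_nonneg v, sq_nonneg (n / ‖w‖)]
    have hnc : n / ‖w‖ ≤ n / c := by
      apply div_le_div_of_nonneg_left (by positivity) hcpos hwc
    have hcase' : 2 * (n:ℝ) < R * c := by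
      have := (div_lt_iff₀ hcpos).1 hcase
      linarith
    have hncR : n / c < R / 2 := by
      rw [div_lt_div_iff₀ hcpos (by norm_num : (0:ℝ) < 2)]
      linarith
    have hvlow : R / 2 < ‖v‖ := by
      have h1 : ‖x‖ - ‖tc • w‖ ≤ ‖x - tc • w‖ := norm_sub_norm_le _ _
      rw [← hv, htw] at h1
      have : n / ‖w‖ < R / 2 := lt_of_le_of_lt hnc hncR
      rw [← hR] at h1
      linarith
    have hv0 : v ≠ 0 := by
      intro h
      rw [h, norm_zero] at hvlow
      linarith
    have hvpos : 0 < ‖v‖ := by linarith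
    -- the angle of x with v
    have hangle : vecAngle x v = Real.arccos (‖v‖ / R) := by
      unfold vecAngle
      congr 1
      rw [hxv]
      rw [norm_pow, Complex.norm_real, Real.norm_eq_abs, abs_of_pos hvpos]
      rw [← hR]
      field_simp
    set s0 : ℝ := n / (‖w‖ * R) with hs0
    have hs0pos : 0 < s0 := by positivity
    have hs0le : s0 ≤ n / (c * R) := by
      apply div_le_div_of_nonneg_left (by positivity) (by positivity)
      apply mul_le_mul_of_nonneg_right hwc hRpos.le
    have hs0lt1 : s0 < 1 := by
      have h9 : (n:ℝ) / (c * R) < 1 / 2 := by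
        rw [div_lt_div_iff₀ (by positivity) (by norm_num : (0:ℝ) < 2)]
        nlinarith [hcase']
      linarith [lt_of_le_of_lt hs0le h9]
    have hA : (n:ℝ)^2 = (R^2 - ‖v‖^2) * ‖w‖^2 := by
      have h0 : (n:ℝ)^2 / ‖w‖^2 = R^2 - ‖v‖^2 := by
        rw [← div_pow]
        linarith [hpyth]
      rw [div_eq_iff (by positivity : (0:ℝ) < ‖w‖^2).ne'] at h0
      linarith
    have hsq : 1 - (‖v‖ / R)^2 = s0^2 := by
      have hstep : 1 - (‖v‖ / R)^2 = (R^2 - ‖v‖^2) / R^2 := by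
        field_simp
      rw [hstep, hs0, div_pow, mul_pow]
      rw [div_eq_div_iff (by positivity) (by positivity)]
      linear_combination (- R^2) * hA
    have harccos : Real.arccos (‖v‖ / R) = Real.arcsin s0 := by
      rw [Real.arccos_eq_arcsin (by positivity), hsq, Real.sqrt_sq hs0pos.le]
    have hjordan : Real.arcsin s0 ≤ Real.pi / 2 * s0 := by
      set θ := Real.arcsin s0 with hθ
      have hθ0 : 0 ≤ θ := Real.arcsin_nonneg.2 hs0pos.le
      have hθπ : θ ≤ Real.pi / 2 := Real.arcsin_le_pi_div_two _
      have hsin : Real.sin θ = s0 := Real.sin_arcsin (by linarith) hs0lt1.le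
      have := Real.mul_le_sin hθ0 hθπ
      rw [hsin] at this
      have h2 : Real.pi / 2 * (2 / Real.pi * θ) ≤ Real.pi / 2 * s0 :=
        mul_le_mul_of_nonneg_left this (by positivity)
      have h3 : Real.pi / 2 * (2 / Real.pi * θ) = θ := by
        field_simp
      linarith
    have hmem : vecAngle x v ∈ S := ⟨v, hLv, hv0, rfl⟩
    have hfin : Real.pi / 2 * s0 < k / R := by
      have e1 : Real.pi / 2 * s0 ≤ Real.pi / 2 * (n / (c * R)) :=
        mul_le_mul_of_nonneg_left hs0le (by positivity)
      have e2 : Real.pi / 2 * (n / (c * R)) < k / R := by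
        have hn0 : (1:ℝ) ≤ (n:ℝ) := by exact_mod_cast hn1
        have h4 : Real.pi / 2 * (n / (c * R)) = (Real.pi * n / (2 * c)) / R := by
          field_simp
        have h5 : Real.pi * n / (2 * c) < 2 * Real.pi * n / c := by
          rw [div_lt_div_iff₀ (by positivity : (0:ℝ) < 2 * c) hcpos]
          nlinarith [mul_pos (mul_pos hπ (lt_of_lt_of_le one_pos hn0)) hcpos]
        rw [h4, hk, div_lt_div_iff₀ hRpos hRpos]
        exact mul_lt_mul_of_pos_right h5 hRpos
      linarith
    calc sInf S ≤ vecAngle x v := csInf_le hSbdd hmem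
      _ = Real.arccos (‖v‖ / R) := hangle
      _ = Real.arcsin s0 := harccos
      _ ≤ Real.pi / 2 * s0 := hjordan
      _ < k / R := hfin
end
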